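/- arXiv:1604.07772 — 3 statements merged into one kernel-verified Lean document; each statement's English description precedes it below -/
import Mathlib

section
/- For every j ∈ {1,…,p} and every n ∈ ℕ, the coefficient of t^{n+1} in the formal power series w^j equals (A^n e_{j−1})(0). (This expresses Theorem 1 i): the resolvent functions g_j(λ) = ((λI − A)^{−1} e_{j−1}, e_0) have, componentwise, the same Laurent expansion at λ = ∞ as the powers z_0(λ)^j of the branch at infinity of the algebraic function a(z) = λ.) -/
/-- The banded Hessenberg Toeplitz operator `A` acting on complex sequences:
`(A f)(i) = f(i+1) + Σ_{k=0}^{min(i,p)} a_k·f(i−k)`. -/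
noncomputable def Aop (p : ℕ) (a : ℕ → ℂ) (f : ℕ → ℂ) : ℕ → ℂ :=
  fun i => f (i + 1) + ∑ k ∈ Finset.range (min i p + 1), a k * f (i - k)

/-- The standard basis sequence `e_l`. -/
noncomputable def eSeq (l : ℕ) : ℕ → ℂ := fun i => if i = l then 1 else 0

/-- `Aop` as a linear map. -/
noncomputable def Alin (p : ℕ) (a : ℕ → ℂ) : (ℕ → ℂ) →ₗ[ℂ] (ℕ → ℂ) where
  toFun := Aop p a
  map_add' f g := by
    funext i
    simp only [Aop, Pi.add_apply, mul_add, Finset.sum_add_distrib]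
    ring
  map_smul' c f := by
    funext i
    simp only [Aop, Pi.smul_apply, smul_eq_mul, RingHom.id_apply, mul_add, Finset.mul_sum]
    congr 1
    exact Finset.sum_congr rfl fun k _ => by ring

/-- Action of `Aop` on a basis sequence. -/
lemma Aop_eSeq (p : ℕ) (a : ℕ → ℂ) (l : ℕ) :
    Aop p a (eSeq l) = (if l = 0 then 0 else eSeq (l - 1))
      + ∑ k ∈ Finset.range (p + 1), a k • eSeq (l + k) := by
  funext i
  simp only [Aop, eSeq, Pi.add_apply, Finset.sum_apply, Pi.smul_apply, smul_eq_mul]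
  have hsub : Finset.range (min i p + 1) ⊆ Finset.range (p + 1) :=
    Finset.range_subset_range.2 (Nat.add_le_add_right (Nat.min_le_right i p) 1)
  have step1 : ∑ k ∈ Finset.range (min i p + 1), a k * (if i - k = l then (1:ℂ) else 0)
      = ∑ k ∈ Finset.range (min i p + 1), a k * (if i = l + k then (1:ℂ) else 0) := by
    apply Finset.sum_congr rfl
    intro k hk
    simp only [Finset.mem_range] at hk
    have hmin := Nat.min_le_left i p
    have hki : k ≤ i := by omega
    by_cases h : i - k = l
    · have h2 : i = l + k := by omega
      simp [h, h2]
    · have h2 : ¬ (i = l + k) := by omega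
      simp [h, h2]
  have step2 : ∑ k ∈ Finset.range (min i p + 1), a k * (if i = l + k then (1:ℂ) else 0)
      = ∑ k ∈ Finset.range (p + 1), a k * (if i = l + k then (1:ℂ) else 0) := by
    apply Finset.sum_subset hsub
    intro k hk hk2
    simp only [Finset.mem_range] at hk hk2
    have hmin := Nat.min_le_left i p
    have hmin2 := Nat.min_le_right i p
    have : ¬ (i = l + k) := by omega
    simp [this]
  rw [step1, step2]
  congr 1
  rcases l with _ | m
  · simp only [if_pos rfl, Pi.zero_apply]
    have : i + 1 ≠ 0 := by omega
    simp [this]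
  · have h1 : (m + 1 : ℕ) ≠ 0 := by omega
    simp only [if_neg h1, Nat.add_sub_cancel]
    by_cases h : i = m
    · simp [eSeq, h]
    · have h2 : ¬ (i + 1 = m + 1) := by omega
      simp [eSeq, h, h2]

open PowerSeries

/-- for every `j ∈ {1,…,p}` and every `n ∈ ℕ`, the coefficient of
`t^{n+1}` in `w^j` equals `(A^n e_{j−1})(0)`, where `w` is the unique formal power
series with zero constant coefficient satisfying
`w = t·(1 + a_0·w + a_1·w² + … + a_p·w^{p+1})`. -/
theorem statement_0 (p : ℕ) (hp : 1 ≤ p) (a : ℕ → ℂ) (hap : a p ≠ 0)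
    (w : PowerSeries ℂ) (hw0 : PowerSeries.constantCoeff w = 0)
    (hw : w = PowerSeries.X * (1 + ∑ k ∈ Finset.range (p + 1),
      PowerSeries.C (a k) * w ^ (k + 1))) :
    ∀ j : ℕ, 1 ≤ j → j ≤ p → ∀ n : ℕ,
      PowerSeries.coeff (n + 1) (w ^ j) = ((Aop p a)^[n] (eSeq (j - 1))) 0 := by
  have hXdvd : (X : PowerSeries ℂ) ∣ w := PowerSeries.X_dvd_iff.2 hw0
  have hexpand : ∀ l : ℕ, w ^ (l + 1) = X * w ^ l
      + ∑ k ∈ Finset.range (p + 1), C (a k) * (X * w ^ (l + k + 1)) := by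
    intro l
    conv_lhs => rw [pow_succ]; rhs; rw [hw]
    calc w ^ l * (X * (1 + ∑ k ∈ Finset.range (p + 1), C (a k) * w ^ (k + 1)))
        = X * w ^ l + X * w ^ l * (∑ k ∈ Finset.range (p + 1), C (a k) * w ^ (k + 1)) := by
          ring
      _ = X * w ^ l + ∑ k ∈ Finset.range (p + 1), X * w ^ l * (C (a k) * w ^ (k + 1)) := by
          rw [Finset.mul_sum]
      _ = X * w ^ l + ∑ k ∈ Finset.range (p + 1), C (a k) * (X * w ^ (l + k + 1)) := by
          congr 1
          refine Finset.sum_congr rfl fun k _ => ?_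
          rw [show l + k + 1 = l + (k + 1) from rfl, pow_add]
          ring
  have hiter : ∀ n (f : ℕ → ℂ), (Aop p a)^[n] f = ((Alin p a) ^ n) f := by
    intro n f
    rw [Module.End.pow_apply]
    rfl
  have key : ∀ n l : ℕ,
      PowerSeries.coeff (n + 1) (w ^ (l + 1)) = ((Aop p a)^[n] (eSeq l)) 0 := by
    intro n
    induction n with
    | zero =>
      intro l
      simp only [Function.iterate_zero, id_eq]
      rcases l with _ | m
      · rw [pow_one, hw, PowerSeries.coeff_succ_X_mul]
        simp [eSeq, hw0, PowerSeries.coeff_zero_eq_constantCoeff]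
      · have hdvd : (X : PowerSeries ℂ) ^ (m + 2) ∣ w ^ (m + 2) := pow_dvd_pow_of_dvd hXdvd _
        have h0 : PowerSeries.coeff 1 (w ^ (m + 2)) = 0 :=
          (PowerSeries.X_pow_dvd_iff.mp hdvd) 1 (by omega)
        rw [show m + 1 + 1 = m + 2 from rfl, h0]
        simp [eSeq]
    | succ n ih =>
      intro l
      rw [hexpand l, map_add, map_sum, Function.iterate_succ_apply, Aop_eSeq, hiter,
        map_add, map_sum]
      simp only [Pi.add_apply, Finset.sum_apply]
      congr 1
      · rw [PowerSeries.coeff_succ_X_mul]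
        rcases l with _ | m
        · rw [pow_zero]
          simp [PowerSeries.coeff_one]
        · rw [if_neg (by omega : ¬ (m + 1 = 0)), Nat.add_sub_cancel, ← hiter]
          exact ih m
      · refine Finset.sum_congr rfl fun k _ => ?_
        rw [PowerSeries.coeff_C_mul, PowerSeries.coeff_succ_X_mul, ih (l + k),
          map_smul, Pi.smul_apply, smul_eq_mul, hiter]
  intro j hj1 hj2 n
  have := key n (j - 1)
  rwa [Nat.sub_add_cancel hj1] at this
end

section
/- For each j ∈ {1,…,p} and each n ≥ j, the formal power series Q̃_n(t)·w(t)^j − t^j·Q̃_{n−j}(t) has order at least n + n_j + 1 (its coefficient of t^m vanishes for every m ≤ n + n_j), where Q̃_m(t) := t^m·Q_m(1/t) ∈ ℂ[t] denotes the reversed polynomial of Q_m. (This is the type II Hermite–Padé property Q_n(λ)·z_0(λ)^j − Q_{n−j}(λ) = O(λ^{−n_j−1}) as λ → ∞ of Theorem 1 iii).) -/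
open Polynomial PowerSeries

theorem hpMonic (p : ℕ) (a : ℕ → ℂ) (Q : ℕ → Polynomial ℂ) (hQ0 : Q 0 = 1)
    (hQrec : ∀ n : ℕ, Polynomial.X * Q n =
      Q (n + 1) + ∑ k ∈ Finset.range (min n p + 1), Polynomial.C (a k) * Q (n - k)) :
    ∀ n, (Q n).Monic ∧ (Q n).natDegree = n := by
  intro n
  induction n using Nat.strong_induction_on with
  | _ n IH =>
    match n with
    | 0 => exact ⟨hQ0 ▸ monic_one, hQ0 ▸ natDegree_one⟩
    | Nat.succ n =>
      have hXQ : (Polynomial.X * Q n).Monic := monic_X.mul (IH n (Nat.lt_succ_self n)).1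
      have hXQd : (Polynomial.X * Q n).natDegree = n + 1 := by
        rw [monic_X.natDegree_mul (IH n (Nat.lt_succ_self n)).1, natDegree_X,
          (IH n (Nat.lt_succ_self n)).2, add_comm]
      have hS : (∑ k ∈ Finset.range (min n p + 1), Polynomial.C (a k) * Q (n - k)).degree
          < ((n + 1 : ℕ) : WithBot ℕ) := by
        refine lt_of_le_of_lt (Polynomial.degree_sum_le _ _) ?_
        rw [Finset.sup_lt_iff (by exact_mod_cast WithBot.bot_lt_coe (n+1))]
        intro k hk
        have hCle : (Polynomial.C (a k) * Q (n - k)).degree ≤ (Q (n - k)).degree := by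
          refine le_trans (Polynomial.degree_mul_le _ _) ?_
          calc Polynomial.degree (Polynomial.C (a k)) + (Q (n - k)).degree
              ≤ 0 + (Q (n - k)).degree := add_le_add Polynomial.degree_C_le le_rfl
            _ = (Q (n - k)).degree := zero_add _
        refine lt_of_le_of_lt hCle ?_
        have h1 := (IH (n - k) (by omega)).1
        have h2 := (IH (n - k) (by omega)).2
        rw [Polynomial.degree_eq_natDegree h1.ne_zero, h2]
        exact_mod_cast Nat.lt_succ_of_le (Nat.sub_le n k)
      have hQn1 : Q (n + 1) = Polynomial.X * Q n
          + -(∑ k ∈ Finset.range (min n p + 1), Polynomial.C (a k) * Q (n - k)) := by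
        rw [← sub_eq_add_neg, eq_sub_iff_add_eq, ← hQrec n]
      have hdlt : (-(∑ k ∈ Finset.range (min n p + 1), Polynomial.C (a k) * Q (n - k))).degree
          < (Polynomial.X * Q n).degree := by
        rw [degree_neg, Polynomial.degree_eq_natDegree hXQ.ne_zero, hXQd]
        exact hS
      constructor
      · rw [hQn1]; exact hXQ.add_of_left hdlt
      · rw [hQn1]
        have := Polynomial.degree_add_eq_left_of_degree_lt hdlt
        rw [Polynomial.degree_eq_natDegree hXQ.ne_zero, hXQd] at this
        exact Polynomial.natDegree_eq_of_degree_eq_some this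


theorem hpRevP (p : ℕ) (a : ℕ → ℂ) (Q : ℕ → Polynomial ℂ)
    (hdeg : ∀ n, (Q n).Monic ∧ (Q n).natDegree = n)
    (hQrec : ∀ n : ℕ, Polynomial.X * Q n =
      Q (n + 1) + ∑ k ∈ Finset.range (min n p + 1), Polynomial.C (a k) * Q (n - k)) :
    ∀ n, (Q n).reverse = (Q (n+1)).reverse
      + ∑ k ∈ Finset.range (min n p + 1),
          Polynomial.C (a k) * (Polynomial.X ^ (k+1) * (Q (n-k)).reverse) := by
  intro n
  have h := congrArg (Polynomial.reflect (n+1)) (hQrec n)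
  -- LHS: reflect (n+1) (X * Q n) = reverse (Q n)
  have hL : Polynomial.reflect (n+1) (Polynomial.X * Q n) = (Q n).reverse := by
    have : Polynomial.reflect (1 + n) (Polynomial.X * Q n)
        = Polynomial.reflect 1 Polynomial.X * Polynomial.reflect n (Q n) :=
      Polynomial.reflect_mul _ _ (by simp) (hdeg n).2.le
    rw [add_comm 1 n] at this
    rw [this]
    have h1 : Polynomial.reflect 1 (Polynomial.X : ℂ[X]) = 1 := by
      rw [← pow_one (Polynomial.X : ℂ[X]), Polynomial.reflect_monomial,
        Polynomial.revAt_le (le_refl 1), Nat.sub_self, pow_zero]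
    rw [h1, one_mul, Polynomial.reverse, (hdeg n).2]
  -- sum distribution
  have hhom : ∀ (s : Finset ℕ) (f : ℕ → ℂ[X]),
      Polynomial.reflect (n+1) (∑ k ∈ s, f k) = ∑ k ∈ s, Polynomial.reflect (n+1) (f k) := by
    intro s f
    exact map_sum (AddMonoidHom.mk' (Polynomial.reflect (n+1))
      (fun f g => Polynomial.reflect_add f g (n+1))) f s
  rw [Polynomial.reflect_add, hhom, hL] at h
  rw [h, Polynomial.reverse, (hdeg (n+1)).2]
  congr 1
  refine Finset.sum_congr rfl fun k hk => ?_
  have hkn : k ≤ n := le_trans (Nat.lt_succ_iff.mp (Finset.mem_range.mp hk)) (min_le_left n p)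
  rw [Polynomial.reflect_C_mul]
  congr 1
  have : Polynomial.reflect ((k+1) + (n-k)) ((1 : ℂ[X]) * Q (n-k))
      = Polynomial.reflect (k+1) (1 : ℂ[X]) * Polynomial.reflect (n-k) (Q (n-k)) :=
    Polynomial.reflect_mul _ _ (by simp) (hdeg (n-k)).2.le
  rw [one_mul, show (k+1) + (n-k) = n + 1 by omega] at this
  rw [this]
  have h1 : Polynomial.reflect (k+1) (1 : ℂ[X]) = Polynomial.X ^ (k+1) := by
    rw [← pow_zero (Polynomial.X : ℂ[X]), Polynomial.reflect_monomial,
      Polynomial.revAt_le (Nat.zero_le _), Nat.sub_zero]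
  rw [h1, Polynomial.reverse, (hdeg (n-k)).2]


noncomputable def hpE (Q : ℕ → Polynomial ℂ) (w : PowerSeries ℂ) (n j : ℕ) : PowerSeries ℂ :=
  ((Q n).reverse : PowerSeries ℂ) * w ^ j
    - if j ≤ n then PowerSeries.X ^ j * ((Q (n - j)).reverse : PowerSeries ℂ) else 0

theorem hpRevPS (p : ℕ) (a : ℕ → ℂ) (Q : ℕ → Polynomial ℂ)
    (hrevP : ∀ n, (Q n).reverse = (Q (n+1)).reverse
      + ∑ k ∈ Finset.range (min n p + 1),
          Polynomial.C (a k) * (Polynomial.X ^ (k+1) * (Q (n-k)).reverse)) :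
    ∀ n, (((Q n).reverse : PowerSeries ℂ)) = ((Q (n+1)).reverse : PowerSeries ℂ)
      + ∑ k ∈ Finset.range (p + 1), PowerSeries.C (a k)
          * (PowerSeries.X ^ (k+1)
            * (if k ≤ n then ((Q (n-k)).reverse : PowerSeries ℂ) else 0)) := by
  intro n
  have h := congrArg (Polynomial.coeToPowerSeries.ringHom (R := ℂ)) (hrevP n)
  simp only [map_add, map_sum, map_mul, map_pow, Polynomial.coeToPowerSeries.ringHom_apply,
    Polynomial.coe_C, Polynomial.coe_X] at h
  rw [h]
  congr 1
  have hsub : Finset.range (min n p + 1) ⊆ Finset.range (p + 1) :=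
    Finset.range_subset_range.mpr (by omega)
  rw [← Finset.sum_subset hsub (fun k hk1 hk2 => by
    simp only [Finset.mem_range] at hk1 hk2
    rw [if_neg (by omega : ¬ k ≤ n), mul_zero, mul_zero])]
  refine Finset.sum_congr rfl fun k hk => ?_
  have hkk := Finset.mem_range.mp hk
  rw [if_pos (by omega : k ≤ n)]

theorem hpR (p : ℕ) (a : ℕ → ℂ) (Q : ℕ → Polynomial ℂ) (w : PowerSeries ℂ)
    (hw : w = PowerSeries.X * (1 + ∑ k ∈ Finset.range (p + 1),
      PowerSeries.C (a k) * w ^ (k + 1)))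
    (hrevPS : ∀ n, (((Q n).reverse : PowerSeries ℂ)) = ((Q (n+1)).reverse : PowerSeries ℂ)
      + ∑ k ∈ Finset.range (p + 1), PowerSeries.C (a k)
          * (PowerSeries.X ^ (k+1)
            * (if k ≤ n then ((Q (n-k)).reverse : PowerSeries ℂ) else 0))) :
    ∀ n j, j + 1 ≤ n → hpE Q w n (j+1) = w * hpE Q w n j
      + ∑ k ∈ Finset.range (p + 1), PowerSeries.C (a k)
          * (PowerSeries.X ^ (j+1) * hpE Q w (n-j) (k+1)) := by
  intro n j hjn
  have h1 : n - (j+1) + 1 = n - j := by omega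
  have e1 := hrevPS (n - (j+1))
  rw [h1] at e1
  -- abbreviations
  set Sw : PowerSeries ℂ := ∑ k ∈ Finset.range (p + 1), PowerSeries.C (a k) * w ^ (k + 1)
    with hSw
  set S2 : PowerSeries ℂ := ∑ k ∈ Finset.range (p + 1), PowerSeries.C (a k)
      * (PowerSeries.X ^ (k+1)
        * (if k ≤ n - (j+1) then ((Q (n-(j+1)-k)).reverse : PowerSeries ℂ) else 0)) with hS2
  have hwX : w * PowerSeries.X ^ j
      = PowerSeries.X ^ (j+1) + Sw * PowerSeries.X ^ (j+1) := by
    conv_lhs => rw [hw]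
    ring
  -- rewrite the sum on the RHS
  have hsum : ∑ k ∈ Finset.range (p + 1), PowerSeries.C (a k)
          * (PowerSeries.X ^ (j+1) * hpE Q w (n-j) (k+1))
      = Sw * (PowerSeries.X ^ (j+1) * ((Q (n-j)).reverse : PowerSeries ℂ))
        - PowerSeries.X ^ (j+1) * S2 := by
    simp only [hpE]
    rw [hSw, hS2, Finset.sum_mul, Finset.mul_sum, ← Finset.sum_sub_distrib]
    refine Finset.sum_congr rfl fun k hk => ?_
    have hiff : (k + 1 ≤ n - j) = (k ≤ n - (j+1)) := by
      apply propext; omega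
    have hidx : n - j - (k+1) = n - (j+1) - k := by omega
    rw [mul_sub]
    by_cases hc : k ≤ n - (j+1)
    · rw [if_pos (by omega : k + 1 ≤ n - j), if_pos hc, hidx]
      ring
    · rw [if_neg (by omega : ¬ k + 1 ≤ n - j), if_neg hc]
      ring
  rw [hsum]
  simp only [hpE, if_pos (by omega : j + 1 ≤ n), if_pos (by omega : j ≤ n)]
  linear_combination (((Q (n-j)).reverse : PowerSeries ℂ)) * hwX
    - PowerSeries.X ^ (j+1) * e1



def hpB (p n j : ℕ) : ℕ := if j ≤ n then n + (n - j) / p + 1 else n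

theorem hpMain (p : ℕ) (hp : 1 ≤ p) (a : ℕ → ℂ) (Q : ℕ → Polynomial ℂ) (w : PowerSeries ℂ)
    (hw0 : PowerSeries.constantCoeff w = 0)
    (hR : ∀ n j, j + 1 ≤ n → hpE Q w n (j+1) = w * hpE Q w n j
      + ∑ k ∈ Finset.range (p + 1), PowerSeries.C (a k)
          * (PowerSeries.X ^ (j+1) * hpE Q w (n-j) (k+1))) :
    ∀ m n j, j ≤ p + 1 → m ≤ hpB p n j → PowerSeries.coeff m (hpE Q w n j) = 0 := by
  have hdiv : ∀ x k : ℕ, k ≤ p → x / p ≤ (x - k) / p + 1 := by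
    intro x k hk
    rcases le_or_gt k x with h | h
    · calc x / p ≤ (x - k + p) / p := Nat.div_le_div_right (by omega)
        _ = (x - k) / p + 1 := Nat.add_div_right _ (by omega)
    · have h1 : x / p = 0 := Nat.div_eq_of_lt (by omega)
      have h2 : (x - k) / p = 0 := by
        rw [Nat.sub_eq_zero_of_le h.le]
        exact Nat.zero_div p
      omega
  intro m
  induction m using Nat.strong_induction_on with
  | _ m IH =>
  intro n j hjp hm
  rcases Nat.eq_zero_or_pos j with hj0 | hj1
  · subst hj0
    have : hpE Q w n 0 = 0 := by
      simp [hpE]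
    rw [this, map_zero]
  rcases lt_or_ge n j with hnj | hjn
  · -- boundary: n < j, E = Qt n * w^j, order ≥ j > n ≥ m
    have hmn : m ≤ n := by
      have : hpB p n j = n := if_neg (by omega)
      omega
    have hXw : (PowerSeries.X : PowerSeries ℂ) ∣ w := PowerSeries.X_dvd_iff.mpr hw0
    have hdvd : (PowerSeries.X : PowerSeries ℂ) ^ j ∣ ((Q n).reverse : PowerSeries ℂ) * w ^ j :=
      Dvd.dvd.mul_left (pow_dvd_pow_of_dvd hXw j) _
    have : hpE Q w n j = ((Q n).reverse : PowerSeries ℂ) * w ^ j := by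
      rw [hpE, if_neg (by omega : ¬ j ≤ n), sub_zero]
    rw [this]
    exact PowerSeries.X_pow_dvd_iff.mp hdvd m (by omega)
  · -- main case: 1 ≤ j ≤ n
    obtain ⟨j', rfl⟩ : ∃ j', j = j' + 1 := ⟨j - 1, by omega⟩
    have hBm : m ≤ n + (n - (j'+1)) / p + 1 := by
      have : hpB p n (j'+1) = n + (n - (j'+1)) / p + 1 := if_pos hjn
      omega
    rw [hR n j' hjn, map_add]
    have h1 : PowerSeries.coeff m (w * hpE Q w n j') = 0 := by
      rw [PowerSeries.coeff_mul]
      refine Finset.sum_eq_zero fun ⟨i, l⟩ hil => ?_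
      have hil' : i + l = m := Finset.HasAntidiagonal.mem_antidiagonal.mp hil
      rcases Nat.eq_zero_or_pos i with hi0 | hi1
      · subst hi0
        rw [PowerSeries.coeff_zero_eq_constantCoeff, hw0, zero_mul]
      · have hlm : l < m := by omega
        have hlB : l ≤ hpB p n j' := by
          have hj'n : j' ≤ n := by omega
          have hd : (n - (j'+1)) / p ≤ (n - j') / p :=
            Nat.div_le_div_right (by omega)
          have : hpB p n j' = n + (n - j') / p + 1 := if_pos hj'n
          omega
        rw [IH l hlm n j' (by omega) hlB, mul_zero]
    have h2 : PowerSeries.coeff m (∑ k ∈ Finset.range (p + 1), PowerSeries.C (a k)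
        * (PowerSeries.X ^ (j'+1) * hpE Q w (n-j') (k+1))) = 0 := by
      rw [map_sum]
      refine Finset.sum_eq_zero fun k hk => ?_
      have hkp : k ≤ p := by have := Finset.mem_range.mp hk; omega
      rw [PowerSeries.coeff_C_mul, PowerSeries.coeff_X_pow_mul']
      rcases lt_or_ge m (j'+1) with hmj | hmj
      · rw [if_neg (by omega), mul_zero]
      · rw [if_pos hmj]
        have hlt : m - (j'+1) < m := by omega
        have hbound : m - (j'+1) ≤ hpB p (n-j') (k+1) := by
          rcases le_or_gt (k+1) (n-j') with hc | hc
          · have heq : hpB p (n-j') (k+1) = (n-j') + ((n-j') - (k+1)) / p + 1 := if_pos hc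
            have hd := hdiv (n - (j'+1)) k hkp
            have hsub : n - (j'+1) - k = n - j' - (k+1) := by omega
            rw [hsub] at hd
            omega
          · have heq : hpB p (n-j') (k+1) = n - j' := if_neg (by omega)
            have hz : (n - (j'+1)) / p = 0 := Nat.div_eq_of_lt (by omega)
            omega
        rw [IH (m - (j'+1)) hlt (n-j') (k+1) (by omega) hbound, mul_zero]
    rw [h1, h2, add_zero]

/-- the type II Hermite–Padé property. For `j ∈ {1,…,p}` and `n ≥ j`,
the formal power series `Q̃_n(t)·w(t)^j − t^j·Q̃_{n−j}(t)` has order at least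
`n + n_j + 1`, where `Q̃_m` is the reversed polynomial `t^m·Q_m(1/t)` and
`n_j = ⌊(n−j)/p⌋ + 1`. -/
theorem statement_2 (p : ℕ) (hp : 1 ≤ p) (a : ℕ → ℂ) (hap : a p ≠ 0)
    (Q : ℕ → Polynomial ℂ) (hQ0 : Q 0 = 1)
    (hQrec : ∀ n : ℕ, Polynomial.X * Q n =
      Q (n + 1) + ∑ k ∈ Finset.range (min n p + 1), Polynomial.C (a k) * Q (n - k))
    (w : PowerSeries ℂ) (hw0 : PowerSeries.constantCoeff w = 0)
    (hw : w = PowerSeries.X * (1 + ∑ k ∈ Finset.range (p + 1),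
      PowerSeries.C (a k) * w ^ (k + 1))) :
    ∀ j : ℕ, 1 ≤ j → j ≤ p → ∀ n : ℕ, j ≤ n →
      ∀ m : ℕ, m ≤ n + ((n - j) / p + 1) →
        PowerSeries.coeff m
          (((Q n).reverse : PowerSeries ℂ) * w ^ j
            - PowerSeries.X ^ j * ((Q (n - j)).reverse : PowerSeries ℂ)) = 0 := by
  intro j hj1 hjp n hjn m hm
  have hdeg := hpMonic p a Q hQ0 hQrec
  have hrevP := hpRevP p a Q hdeg hQrec
  have hrevPS := hpRevPS p a Q hrevP
  have hR := hpR p a Q w hw hrevPS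
  have main := hpMain p hp a Q w hw0 hR m n j (by omega)
    (by rw [hpB, if_pos hjn]; omega)
  rw [hpE, if_pos hjn] at main
  exact main
end

section
/- Let p ≥ 1, and let λ, a_0, …, a_p, h_1, …, h_p ∈ ℂ with a_p ≠ 0 and h_p + λ − a_0 ≠ 0. Assume h_1 = −a_p/(h_p + λ − a_0) and h_k = (h_{k−1} − a_{p−k+1})/(h_p + λ − a_0) for k = 2, …, p. Set w := −h_1/a_p. Then: (i) for every k = 1, …, p, h_k = −( a_p·w^k + a_{p−1}·w^{k−1} + … + a_{p−k+1}·w ); and (ii) a_p·w^{p+1} + a_{p−1}·w^p + … + a_1·w² + (a_0 − λ)·w + 1 = 0, i.e., −h_1/a_p is a solution of the algebraic equation a(z) = λ, where a(z) = z^{−1} + a_0 + a_1 z + … + a_p z^p. -/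
/-- identities satisfied by the tail `(h_1, …, h_p)` of the vector
continued fraction of the generalized Jacobi–Perron algorithm: with
`w = −h_1/a_p`, each `h_k = −(a_p·w^k + … + a_{p−k+1}·w)` and `w` solves
`a_p·w^{p+1} + … + a_1·w² + (a_0 − λ)·w + 1 = 0`. -/
theorem statement_17 (p : ℕ) (hp : 1 ≤ p) (lam : ℂ) (a h : ℕ → ℂ)
    (hap : a p ≠ 0) (hden : h p + lam - a 0 ≠ 0)
    (h1 : h 1 = -a p / (h p + lam - a 0))
    (hk : ∀ k : ℕ, 2 ≤ k → k ≤ p →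
      h k = (h (k - 1) - a (p - k + 1)) / (h p + lam - a 0)) :
    (∀ k : ℕ, 1 ≤ k → k ≤ p →
      h k = -(∑ i ∈ Finset.Icc 1 k, a (p - k + i) * (-h 1 / a p) ^ i)) ∧
    (∑ k ∈ Finset.Icc 1 p, a k * (-h 1 / a p) ^ (k + 1) +
      (a 0 - lam) * (-h 1 / a p) + 1 = 0) := by
  set D := h p + lam - a 0 with hD
  set w := -h 1 / a p with hwdef
  have hw : w * D = 1 := by
    rw [hwdef, h1]; field_simp
  have hDw : D⁻¹ = w := (eq_inv_of_mul_eq_one_left hw).symm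
  have key : ∀ k : ℕ, 1 ≤ k → k ≤ p →
      h k = -(∑ i ∈ Finset.range k, a (p - k + 1 + i) * w ^ (i + 1)) := by
    intro k hk1
    induction k, hk1 using Nat.le_induction with
    | base =>
      intro _
      have : p - 1 + 1 = p := by omega
      simp only [Finset.range_one, Finset.sum_singleton, this, add_zero, pow_one]
      rw [hwdef]
      field_simp
      rw [zero_add, pow_one]; field_simp
    | succ k hk1 ih =>
      intro hkp
      have hkp' : k ≤ p := Nat.le_of_succ_le hkp
      have hsub : p - (k + 1) + 1 = p - k := by omega
      have e1 : h (k + 1) = (h k - a (p - k)) * w := by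
        have := hk (k + 1) (by omega) hkp
        rw [this]
        simp only [Nat.add_sub_cancel, hsub, div_eq_mul_inv, hDw]
      have hmul : (∑ i ∈ Finset.range k, a (p - k + 1 + i) * w ^ (i + 1)) * w
          = ∑ i ∈ Finset.range k, a (p - k + (i + 1)) * w ^ (i + 1 + 1) := by
        rw [Finset.sum_mul]
        apply Finset.sum_congr rfl
        intro i _
        rw [show p - k + (i + 1) = p - k + 1 + i from by omega]
        ring
      rw [e1, ih hkp']
      simp only [hsub, Finset.sum_range_succ']
      rw [← hmul]
      simp only [add_zero]
      ring
  have hpkey := key p hp le_rfl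
  constructor
  · intro k hk1 hkp
    rw [key k hk1 hkp, ← Finset.Ico_add_one_right_eq_Icc, Finset.sum_Ico_eq_sum_range]
    congr 1
    rw [show k + 1 - 1 = k from by omega]
    apply Finset.sum_congr rfl
    intro i _
    rw [show p - k + (1 + i) = p - k + 1 + i from by omega, add_comm 1 i]
  · have hsum : (∑ k ∈ Finset.Icc 1 p, a k * w ^ (k + 1))
        = (∑ i ∈ Finset.range p, a (p - p + 1 + i) * w ^ (i + 1)) * w := by
      rw [Finset.sum_mul, ← Finset.Ico_add_one_right_eq_Icc, Finset.sum_Ico_eq_sum_range,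
        show p + 1 - 1 = p from by omega]
      apply Finset.sum_congr rfl
      intro i _
      rw [show p - p + 1 + i = 1 + i from by omega]
      ring
    rw [hsum]
    linear_combination -hw + w * hpkey
end
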